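/- Let β, γ > 0, let 0 ≤ s₁ < s₂ < … < s_n and 0 ≤ t₁ < t₂ < … < t_m with n, m ≥ 2. Let P be the n×n matrix with entries P_{ij} = exp(−β|s_i − s_j|), Q the m×m matrix with entries Q_{ij} = exp(−γ|t_i − t_j|), and let G be the 3×(nm) matrix whose column indexed by the pair (i,j) is (1, s_i, t_j)ᵀ. Then P and Q are invertible and G·(P ⊗ Q)⁻¹·Gᵀ equals the 3×3 matrix [[L1·M1, L2·M1, L1·M2], [L2·M1, L3·M1, L2·M2], [L1·M2, L2·M2, L1·M3]], where, with p_i = exp(−β(s_{i+1}−s_i)) and q_j = exp(−γ(t_{j+1}−t_j)): L1 = 1 + Σ_{i=1}^{n−1}(1−p_i)/(1+p_i), L2 = s₁ + Σ_{i=1}^{n−1}(s_{i+1}−s_i p_i)/(1+p_i), L3 = s₁² + Σ_{i=1}^{n−1}(s_{i+1}−s_i p_i)²/(1−p_i²), and M1 = 1 + Σ_{j=1}^{m−1}(1−q_j)/(1+q_j), M2 = t₁ + Σ_{j=1}^{m−1}(t_{j+1}−t_j q_j)/(1+q_j), M3 = t₁² + Σ_{j=1}^{m−1}(t_{j+1}−t_j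 q_j)²/(1−q_j²). -/

import Mathlib

open Real

namespace OU1D
open Matrix
variable (β : ℝ) (n : ℕ) (s : ℕ → ℝ)

noncomputable def pp (i : ℕ) : ℝ := Real.exp (-β * (s (i+1) - s i))

noncomputable def Pm : Matrix (Fin n) (Fin n) ℝ :=
  Matrix.of fun i j => Real.exp (-β * |s i.1 - s j.1|)

noncomputable def Am : Matrix (Fin n) (Fin n) ℝ :=
  Matrix.of fun i j => if i = j then 1 else if (j : ℕ) + 1 = (i : ℕ) then -pp β s j else 0

noncomputable def dv : Fin n → ℝ := fun i =>
  match (i : ℕ) with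
  | 0 => 1
  | k+1 => 1 - pp β s k ^ 2

lemma rowsum_zero (i : Fin n) (hi : (i : ℕ) = 0) (f : Fin n → ℝ) :
    ∑ j, Am β n s i j * f j = f i := by
  have h : ∀ j : Fin n, Am β n s i j * f j = if j = i then f j else 0 := by
    intro j
    by_cases h1 : i = j
    · subst h1; simp [Am]
    · have h2 : ¬((j : ℕ) + 1 = (i : ℕ)) := by omega
      simp [Am, h1, Ne.symm h1, h2]
  rw [Finset.sum_congr rfl fun j _ => h j, Finset.sum_ite_eq' Finset.univ i f]
  simp

lemma rowsum_succ (i : Fin n) (a : ℕ) (hi : (i : ℕ) = a + 1) (f : Fin n → ℝ) :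
    ∑ j, Am β n s i j * f j = f i - pp β s a * f ⟨a, by omega⟩ := by
  set a' : Fin n := ⟨a, by omega⟩ with ha'
  have hne : i ≠ a' := by
    intro h; apply_fun (Fin.val) at h; simp [ha'] at h; omega
  have h : ∀ j : Fin n, Am β n s i j * f j =
      (if j = i then f j else 0) + (if j = a' then -pp β s a * f j else 0) := by
    intro j
    by_cases h1 : i = j
    · subst h1
      rw [if_pos rfl, if_neg hne]
      simp [Am]
    · by_cases h2 : j = a'
      · subst h2
        have hv : (a' : ℕ) + 1 = (i : ℕ) := by simp [ha']; omega
        rw [if_neg (Ne.symm h1), if_pos rfl]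
        simp [Am, h1, Ne.symm h1, hv]
        exact Or.inl rfl
      · have h3 : ¬((j : ℕ) + 1 = (i : ℕ)) := by
          intro hc
          apply h2; apply Fin.ext
          have : (a' : ℕ) = a := rfl
          omega
        simp [Am, h1, Ne.symm h1, h3, h2]
  rw [Finset.sum_congr rfl fun j _ => h j, Finset.sum_add_distrib,
    Finset.sum_ite_eq' Finset.univ i f,
    Finset.sum_ite_eq' Finset.univ a' (fun j => -pp β s a * f j)]
  simp; ring


lemma smono (hs : ∀ i, i + 1 < n → s i < s (i + 1)) :
    ∀ i j : ℕ, i ≤ j → j < n → s i ≤ s j := by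
  intro i j hij hj
  induction j with
  | zero => simp_all
  | succ k ih =>
    rcases Nat.lt_or_ge i (k+1) with h | h
    · exact le_trans (ih (by omega) (by omega)) (le_of_lt (hs k hj))
    · have : i = k + 1 := by omega
      subst this; rfl

lemma Pm_le (hs : ∀ i, i + 1 < n → s i < s (i + 1)) (i j : Fin n) (h : (j : ℕ) ≤ (i : ℕ)) :
    Pm β n s i j = Real.exp (-β * (s i.1 - s j.1)) := by
  have := smono n s hs j.1 i.1 h i.isLt
  show Real.exp (-β * |s i.1 - s j.1|) = _
  rw [abs_of_nonneg (by linarith)]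

lemma exp_fact (x y : ℕ) :
    Real.exp (-β * (s (y+1) - s x)) = pp β s y * Real.exp (-β * (s y - s x)) := by
  rw [pp, ← Real.exp_add]; ring_nf

lemma AP_zero (i : Fin n) (hi : (i : ℕ) = 0) (k : Fin n) :
    (Am β n s * Pm β n s) i k = Pm β n s i k := by
  rw [Matrix.mul_apply]; exact rowsum_zero β n s i hi _

lemma AP_succ_le (hs : ∀ i, i + 1 < n → s i < s (i + 1)) (i : Fin n) (a : ℕ)
    (hi : (i : ℕ) = a + 1) (k : Fin n) (hk : (k : ℕ) ≤ a) :
    (Am β n s * Pm β n s) i k = 0 := by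
  rw [Matrix.mul_apply, rowsum_succ β n s i a hi]
  have h1 : Pm β n s i k = Real.exp (-β * (s i.1 - s k.1)) :=
    Pm_le β n s hs i k (by omega)
  have h2 : Pm β n s ⟨a, by omega⟩ k = Real.exp (-β * (s a - s k.1)) :=
    Pm_le β n s hs ⟨a, by omega⟩ k (by simpa using hk)
  rw [h1, h2, hi, exp_fact β s k.1 a]
  ring

lemma AP_succ_ge (hs : ∀ i, i + 1 < n → s i < s (i + 1)) (i : Fin n) (a : ℕ)
    (hi : (i : ℕ) = a + 1) (k : Fin n) (hk : a + 1 ≤ (k : ℕ)) :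
    (Am β n s * Pm β n s) i k =
      (1 - pp β s a ^ 2) * Real.exp (-β * (s k.1 - s (a+1))) := by
  rw [Matrix.mul_apply, rowsum_succ β n s i a hi]
  have h1 : Pm β n s k i = Real.exp (-β * (s k.1 - s i.1)) :=
    Pm_le β n s hs k i (by omega)
  have h1' : Pm β n s i k = Real.exp (-β * (s k.1 - s i.1)) := by
    rw [← h1]; simp [Pm, abs_sub_comm]
  have h2 : Pm β n s k ⟨a, by omega⟩ = Real.exp (-β * (s k.1 - s a)) :=
    Pm_le β n s hs k ⟨a, by omega⟩ (by simp; omega)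
  have h2' : Pm β n s ⟨a, by omega⟩ k = Real.exp (-β * (s k.1 - s a)) := by
    rw [← h2]; simp [Pm, abs_sub_comm]
  have key : Real.exp (-β * (s k.1 - s a)) = pp β s a * Real.exp (-β * (s k.1 - s (a+1))) := by
    rw [pp, ← Real.exp_add]; ring_nf
  rw [h1', h2', hi, key]
  ring



theorem APAt (hs : ∀ i, i + 1 < n → s i < s (i + 1)) :
    Am β n s * Pm β n s * (Am β n s).transpose = Matrix.diagonal (dv β n s) := by
  ext i j
  rw [Matrix.mul_apply]
  have hcomm : ∀ k : Fin n, (Am β n s * Pm β n s) i k * (Am β n s).transpose k j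
      = Am β n s j k * (Am β n s * Pm β n s) i k := by
    intro k; rw [Matrix.transpose_apply]; ring
  rw [Finset.sum_congr rfl fun k _ => hcomm k]
  rcases Nat.eq_zero_or_eq_succ_pred (j : ℕ) with hj | hj
  · -- j = 0
    rw [rowsum_zero β n s j hj]
    rcases Nat.eq_zero_or_eq_succ_pred (i : ℕ) with hi | hi
    · have hij : i = j := Fin.ext (by omega)
      rw [AP_zero β n s i hi]
      have : Pm β n s i j = 1 := by
        have : (i:ℕ) = (j:ℕ) := by omega
        simp [Pm, this]
      rw [this, hij, Matrix.diagonal_apply_eq]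
      simp [dv, hj]
    · have hij : i ≠ j := fun h => by rw [h] at hi; omega
      rw [AP_succ_le β n s hs i _ hi j (by omega), Matrix.diagonal_apply_ne _ hij]
  · -- j = b+1
    set b := (j:ℕ) - 1 with hb
    rw [rowsum_succ β n s j b hj]
    rcases Nat.eq_zero_or_eq_succ_pred (i : ℕ) with hi | hi
    · have hij : i ≠ j := fun h => by rw [h] at hi; omega
      rw [AP_zero β n s i hi, AP_zero β n s i hi]
      have h1 : Pm β n s i j = Real.exp (-β * (s j.1 - s i.1)) := by
        rw [← Pm_le β n s hs j i (by omega)]; simp [Pm, abs_sub_comm]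
      have h2 : Pm β n s i ⟨b, by omega⟩ = Real.exp (-β * (s b - s i.1)) := by
        rw [← Pm_le β n s hs ⟨b, by omega⟩ i (by simp; omega)]; simp [Pm, abs_sub_comm]
      rw [h1, h2, Matrix.diagonal_apply_ne _ hij]
      have : (j:ℕ) = b + 1 := by omega
      rw [this, exp_fact β s i.1 b]
      ring
    · set a := (i:ℕ) - 1 with ha
      rcases lt_trichotomy ((j:ℕ)) ((i:ℕ)) with hlt | heq | hgt
      · have hij : i ≠ j := fun h => by rw [h] at hlt; omega
        rw [AP_succ_le β n s hs i a hi j (by omega),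
          AP_succ_le β n s hs i a hi ⟨b, by omega⟩ (by simp; omega),
          Matrix.diagonal_apply_ne _ hij]
        ring
      · have hij : i = j := Fin.ext heq.symm
        rw [AP_succ_ge β n s hs i a hi j (by omega),
          AP_succ_le β n s hs i a hi ⟨b, by omega⟩ (by simp; omega)]
        have hj1 : (j:ℕ) = a + 1 := by omega
        rw [hij, Matrix.diagonal_apply_eq]
        simp only [hj1, sub_self, mul_zero, neg_zero, Real.exp_zero]
        have hd : dv β n s j = 1 - pp β s a ^ 2 := by simp only [dv, hj1]
        rw [hd]; ring
      · have hij : i ≠ j := fun h => by rw [h] at hgt; omega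
        rw [AP_succ_ge β n s hs i a hi j (by omega),
          AP_succ_ge β n s hs i a hi ⟨b, by omega⟩ (by simp; omega),
          Matrix.diagonal_apply_ne _ hij]
        have hjb : (j:ℕ) = b + 1 := by omega
        simp only [hjb]
        rw [exp_fact β s (a+1) b]
        ring



lemma Am_det : (Am β n s).det = 1 := by
  have htri : (Am β n s).BlockTriangular OrderDual.toDual := by
    intro i j h
    have hij : (i:ℕ) < (j:ℕ) := h
    have h1 : i ≠ j := fun hc => by rw [hc] at hij; omega
    have h2 : ¬((j:ℕ) + 1 = (i:ℕ)) := by omega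
    simp [Am, h1, h2]
  rw [Matrix.det_of_lowerTriangular _ htri]
  simp [Am]

lemma pp_lt_one (hβ : 0 < β) (hs : ∀ i, i + 1 < n → s i < s (i + 1)) (a : ℕ)
    (ha : a + 1 < n) : pp β s a < 1 := by
  rw [pp, ← Real.exp_zero]
  apply Real.exp_lt_exp.mpr
  have := hs a ha
  nlinarith

lemma pp_pos (a : ℕ) : 0 < pp β s a := Real.exp_pos _

lemma dv_pos (hβ : 0 < β) (hs : ∀ i, i + 1 < n → s i < s (i + 1)) (i : Fin n) :
    0 < dv β n s i := by
  rcases Nat.eq_zero_or_eq_succ_pred (i : ℕ) with hi | hi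
  · rw [show dv β n s i = 1 by simp only [dv, hi]]; norm_num
  · set a := (i:ℕ) - 1 with ha
    have hi' : (i:ℕ) = a + 1 := by omega
    have hd : dv β n s i = 1 - pp β s a ^ 2 := by simp only [dv, hi']
    rw [hd]
    have h1 := pp_lt_one β n s hβ hs a (by omega)
    have h2 := pp_pos β s a
    nlinarith

lemma Pm_det_isUnit (hβ : 0 < β) (hs : ∀ i, i + 1 < n → s i < s (i + 1)) :
    IsUnit (Pm β n s).det := by
  have h := APAt β n s hs
  have hdet : (Am β n s).det * (Pm β n s).det * (Am β n s).det = ∏ i, dv β n s i := by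
    have := congrArg Matrix.det h
    rwa [Matrix.det_mul, Matrix.det_mul, Matrix.det_transpose, Matrix.det_diagonal] at this
  rw [Am_det] at hdet
  have hprod : (0:ℝ) < ∏ i, dv β n s i :=
    Finset.prod_pos fun i _ => dv_pos β n s hβ hs i
  rw [isUnit_iff_ne_zero]
  intro hc
  rw [hc] at hdet
  simp at hdet
  rw [← hdet] at hprod
  exact lt_irrefl _ hprod

lemma Pm_inv (hβ : 0 < β) (hs : ∀ i, i + 1 < n → s i < s (i + 1)) :
    (Pm β n s)⁻¹ = (Am β n s).transpose * (Matrix.diagonal fun i => (dv β n s i)⁻¹) * Am β n s := by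
  have hA : IsUnit (Am β n s).det := by rw [Am_det]; exact isUnit_one
  have hAt : IsUnit (Am β n s).transpose.det := by rw [Matrix.det_transpose, Am_det]; exact isUnit_one
  have h := APAt β n s hs
  have hP : Pm β n s = (Am β n s)⁻¹ * Matrix.diagonal (dv β n s) * ((Am β n s).transpose)⁻¹ := by
    rw [← h]
    rw [Matrix.mul_assoc, Matrix.mul_assoc, Matrix.mul_nonsing_inv _ hAt, Matrix.mul_one,
      ← Matrix.mul_assoc, Matrix.nonsing_inv_mul _ hA, Matrix.one_mul]
  have hD : (Matrix.diagonal (dv β n s))⁻¹ = Matrix.diagonal fun i => (dv β n s i)⁻¹ := by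
    apply Matrix.inv_eq_right_inv
    rw [Matrix.diagonal_mul_diagonal]
    have : (fun i => dv β n s i * (dv β n s i)⁻¹) = fun _ : Fin n => (1:ℝ) := by
      funext i
      exact mul_inv_cancel₀ (ne_of_gt (dv_pos β n s hβ hs i))
    rw [this, Matrix.diagonal_one]
  rw [hP, Matrix.mul_inv_rev, Matrix.mul_inv_rev, Matrix.nonsing_inv_nonsing_inv _ hA,
    Matrix.nonsing_inv_nonsing_inv _ hAt, hD, Matrix.mul_assoc]



lemma Av_zero (v : Fin n → ℝ) (i : Fin n) (hi : (i : ℕ) = 0) :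
    (Am β n s *ᵥ v) i = v i := rowsum_zero β n s i hi v

lemma Av_succ (v : Fin n → ℝ) (i : Fin n) (a : ℕ) (hi : (i : ℕ) = a + 1) :
    (Am β n s *ᵥ v) i = v i - pp β s a * v ⟨a, by omega⟩ := rowsum_succ β n s i a hi v

lemma QF (hβ : 0 < β) (hs : ∀ i, i + 1 < n → s i < s (i + 1)) (v w : Fin n → ℝ) :
    ∑ i, ∑ k, v i * (Pm β n s)⁻¹ i k * w k
      = ∑ i, (dv β n s i)⁻¹ * ((Am β n s *ᵥ v) i * (Am β n s *ᵥ w) i) := by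
  have h1 : ∑ i, ∑ k, v i * (Pm β n s)⁻¹ i k * w k
      = v ⬝ᵥ ((Pm β n s)⁻¹ *ᵥ w) := by
    rw [dotProduct]
    refine Finset.sum_congr rfl fun i _ => ?_
    rw [Matrix.mulVec, dotProduct, Finset.mul_sum]
    refine Finset.sum_congr rfl fun k _ => ?_
    ring
  rw [h1, Pm_inv β n s hβ hs, ← Matrix.mulVec_mulVec, ← Matrix.mulVec_mulVec,
    Matrix.dotProduct_mulVec, Matrix.vecMul_transpose, dotProduct]
  refine Finset.sum_congr rfl fun i _ => ?_
  rw [Matrix.mulVec_diagonal]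
  ring

lemma QF_closed (hβ : 0 < β) (hs : ∀ i, i + 1 < n → s i < s (i + 1)) (hn : 1 ≤ n)
    (v w : Fin n → ℝ) (vN wN : ℕ → ℝ)
    (hv : ∀ i : Fin n, v i = vN i.1) (hw : ∀ i : Fin n, w i = wN i.1) :
    ∑ i, ∑ k, v i * (Pm β n s)⁻¹ i k * w k
      = vN 0 * wN 0 + ∑ a ∈ Finset.range (n-1),
          (1 - pp β s a ^ 2)⁻¹ *
            ((vN (a+1) - pp β s a * vN a) * (wN (a+1) - pp β s a * wN a)) := by
  rw [QF β n s hβ hs v w]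
  set F : ℕ → ℝ := fun k => match k with
    | 0 => vN 0 * wN 0
    | a+1 => (1 - pp β s a ^ 2)⁻¹ *
        ((vN (a+1) - pp β s a * vN a) * (wN (a+1) - pp β s a * wN a)) with hFdef
  have hF : ∀ i : Fin n, (dv β n s i)⁻¹ * ((Am β n s *ᵥ v) i * (Am β n s *ᵥ w) i) = F i.1 := by
    intro i
    rcases Nat.eq_zero_or_eq_succ_pred (i : ℕ) with hi | hi
    · rw [Av_zero β n s v i hi, Av_zero β n s w i hi,
        show dv β n s i = 1 by simp only [dv, hi], hv, hw, hi]
      norm_num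
      rfl
    · set a := (i:ℕ) - 1 with ha
      have hi' : (i:ℕ) = a + 1 := by omega
      rw [Av_succ β n s v i a hi', Av_succ β n s w i a hi',
        show dv β n s i = 1 - pp β s a ^ 2 by simp only [dv, hi'],
        hv, hw, hv, hw]
      simp only [hi', Fin.val_mk, hFdef]
  rw [Finset.sum_congr rfl fun i _ => hF i, Fin.sum_univ_eq_sum_range F n]
  obtain ⟨n', rfl⟩ : ∃ n', n = n' + 1 := ⟨n-1, by omega⟩
  rw [Finset.sum_range_succ']
  simp only [Nat.add_sub_cancel, hFdef]
  exact add_comm _ _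



lemma kron_QF {n m : ℕ} (Pi : Matrix (Fin n) (Fin n) ℝ) (Qi : Matrix (Fin m) (Fin m) ℝ)
    (vN wN xN yN : ℕ → ℝ) :
    (∑ x : Fin n × Fin m, ∑ y : Fin n × Fin m,
        (vN x.1.1 * xN x.2.1) * Matrix.kroneckerMap (· * ·) Pi Qi x y * (wN y.1.1 * yN y.2.1))
      = (∑ i, ∑ k, vN i.1 * Pi i k * wN k.1) * (∑ j, ∑ l, xN j.1 * Qi j l * yN l.1) := by
  rw [Finset.sum_mul_sum]
  simp only [Fintype.sum_prod_type]
  refine Finset.sum_congr rfl fun i _ => ?_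
  refine Finset.sum_congr rfl fun j _ => ?_
  rw [Finset.sum_mul_sum]
  refine Finset.sum_congr rfl fun k _ => ?_
  refine Finset.sum_congr rfl fun l _ => ?_
  simp only [Matrix.kroneckerMap_apply]
  ring


lemma entry_form {n m : ℕ} (G : Matrix (Fin 3) (Fin n × Fin m) ℝ)
    (M : Matrix (Fin n × Fin m) (Fin n × Fin m) ℝ) (a b : Fin 3) :
    (G * M * G.transpose) a b = ∑ x, ∑ y, G a x * M x y * G b y := by
  rw [Matrix.mul_apply]
  have h : ∀ y, (G * M) a y * G.transpose y b = ∑ x, G a x * M x y * G b y := by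
    intro y; rw [Matrix.mul_apply, Matrix.transpose_apply, Finset.sum_mul]
  rw [Finset.sum_congr rfl fun y _ => h y, Finset.sum_comm]

lemma entry_val {n m : ℕ} (Pi : Matrix (Fin n) (Fin n) ℝ) (Qi : Matrix (Fin m) (Fin m) ℝ)
    (G : Matrix (Fin 3) (Fin n × Fin m) ℝ) (a b : Fin 3) (vN wN xN yN : ℕ → ℝ)
    (ha : ∀ x : Fin n × Fin m, G a x = vN x.1.1 * xN x.2.1)
    (hb : ∀ x : Fin n × Fin m, G b x = wN x.1.1 * yN x.2.1) :
    (G * Matrix.kroneckerMap (· * ·) Pi Qi * G.transpose) a b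
      = (∑ i, ∑ k, vN i.1 * Pi i k * wN k.1) * (∑ j, ∑ l, xN j.1 * Qi j l * yN l.1) := by
  rw [entry_form, ← kron_QF Pi Qi vN wN xN yN]
  exact Finset.sum_congr rfl fun x _ => Finset.sum_congr rfl fun y _ => by rw [ha, hb]

end OU1D
open Real Filter

theorem FIM_sheet (β γ : ℝ) (hβ : 0 < β) (hγ : 0 < γ)
    (n m : ℕ) (hn : 2 ≤ n) (hm : 2 ≤ m)
    (s t : ℕ → ℝ) (hs0 : 0 ≤ s 0) (ht0 : 0 ≤ t 0)
    (hs : ∀ i, i + 1 < n → s i < s (i + 1))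
    (ht : ∀ j, j + 1 < m → t j < t (j + 1)) :
    let p : ℕ → ℝ := fun i => exp (-β * (s (i + 1) - s i))
    let q : ℕ → ℝ := fun j => exp (-γ * (t (j + 1) - t j))
    let P : Matrix (Fin n) (Fin n) ℝ := Matrix.of fun i j => exp (-β * |s i.1 - s j.1|)
    let Q : Matrix (Fin m) (Fin m) ℝ := Matrix.of fun i j => exp (-γ * |t i.1 - t j.1|)
    let G : Matrix (Fin 3) (Fin n × Fin m) ℝ :=
      Matrix.of fun k ij => ![(1 : ℝ), s ij.1.1, t ij.2.1] k
    let l1 : ℝ := 1 + ∑ i ∈ Finset.range (n - 1), (1 - p i) / (1 + p i)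
    let l2 : ℝ := s 0 + ∑ i ∈ Finset.range (n - 1), (s (i + 1) - s i * p i) / (1 + p i)
    let l3 : ℝ := s 0 ^ 2 + ∑ i ∈ Finset.range (n - 1), (s (i + 1) - s i * p i) ^ 2 / (1 - p i ^ 2)
    let m1 : ℝ := 1 + ∑ j ∈ Finset.range (m - 1), (1 - q j) / (1 + q j)
    let m2 : ℝ := t 0 + ∑ j ∈ Finset.range (m - 1), (t (j + 1) - t j * q j) / (1 + q j)
    let m3 : ℝ := t 0 ^ 2 + ∑ j ∈ Finset.range (m - 1), (t (j + 1) - t j * q j) ^ 2 / (1 - q j ^ 2)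
    IsUnit P.det ∧ IsUnit Q.det ∧
      G * (Matrix.kroneckerMap (· * ·) P Q)⁻¹ * G.transpose =
        !![l1 * m1, l2 * m1, l1 * m2;
           l2 * m1, l3 * m1, l2 * m2;
           l1 * m2, l2 * m2, l1 * m3] := by
  intro p q P Q G l1 l2 l3 m1 m2 m3
  have hPeq : P = OU1D.Pm β n s := rfl
  have hQeq : Q = OU1D.Pm γ m t := rfl
  refine ⟨OU1D.Pm_det_isUnit β n s hβ hs, OU1D.Pm_det_isUnit γ m t hγ ht, ?_⟩
  rw [hPeq, hQeq, Matrix.inv_kronecker]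
  have hpfacts : ∀ a ∈ Finset.range (n-1), 0 < p a ∧ p a < 1 := by
    intro a ha
    rw [Finset.mem_range] at ha
    exact ⟨Real.exp_pos _, OU1D.pp_lt_one β n s hβ hs a (by omega)⟩
  have hqfacts : ∀ a ∈ Finset.range (m-1), 0 < q a ∧ q a < 1 := by
    intro a ha
    rw [Finset.mem_range] at ha
    exact ⟨Real.exp_pos _, OU1D.pp_lt_one γ m t hγ ht a (by omega)⟩
  -- 1-D quadratic forms for P
  have S1 : (∑ i : Fin n, ∑ k : Fin n, (1:ℝ) * (OU1D.Pm β n s)⁻¹ i k * 1) = l1 := by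
    have base : (∑ i : Fin n, ∑ k : Fin n, (1:ℝ) * (OU1D.Pm β n s)⁻¹ i k * 1)
        = 1 * 1 + ∑ a ∈ Finset.range (n-1),
            (1 - p a ^ 2)⁻¹ * ((1 - p a * 1) * (1 - p a * 1)) :=
      OU1D.QF_closed β n s hβ hs (by omega) (fun _ => 1) (fun _ => 1)
        (fun _ => 1) (fun _ => 1) (fun _ => rfl) (fun _ => rfl)
    rw [base]
    have hterm : ∀ a ∈ Finset.range (n-1),
        (1 - p a ^ 2)⁻¹ * ((1 - p a * 1) * (1 - p a * 1)) = (1 - p a) / (1 + p a) := by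
      intro a ha
      obtain ⟨h1, h2⟩ := hpfacts a ha
      have e1 : 1 + p a ≠ 0 := ne_of_gt (by linarith)
      have e3 : 1 - p a ^ 2 ≠ 0 := ne_of_gt (by nlinarith)
      field_simp
      ring
    rw [Finset.sum_congr rfl hterm, one_mul]
  have S2 : (∑ i : Fin n, ∑ k : Fin n, (1:ℝ) * (OU1D.Pm β n s)⁻¹ i k * s k.1) = l2 := by
    have base : (∑ i : Fin n, ∑ k : Fin n, (1:ℝ) * (OU1D.Pm β n s)⁻¹ i k * s k.1)
        = 1 * s 0 + ∑ a ∈ Finset.range (n-1),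
            (1 - p a ^ 2)⁻¹ * ((1 - p a * 1) * (s (a+1) - p a * s a)) :=
      OU1D.QF_closed β n s hβ hs (by omega) (fun _ => 1) (fun i => s i)
        (fun _ => 1) (fun i => s i) (fun _ => rfl) (fun _ => rfl)
    rw [base]
    have hterm : ∀ a ∈ Finset.range (n-1),
        (1 - p a ^ 2)⁻¹ * ((1 - p a * 1) * (s (a+1) - p a * s a))
          = (s (a+1) - s a * p a) / (1 + p a) := by
      intro a ha
      obtain ⟨h1, h2⟩ := hpfacts a ha
      have e1 : 1 + p a ≠ 0 := ne_of_gt (by linarith)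
      have e3 : 1 - p a ^ 2 ≠ 0 := ne_of_gt (by nlinarith)
      field_simp
      ring
    rw [Finset.sum_congr rfl hterm, one_mul]
  have S2' : (∑ i : Fin n, ∑ k : Fin n, s i.1 * (OU1D.Pm β n s)⁻¹ i k * 1) = l2 := by
    have base : (∑ i : Fin n, ∑ k : Fin n, s i.1 * (OU1D.Pm β n s)⁻¹ i k * 1)
        = s 0 * 1 + ∑ a ∈ Finset.range (n-1),
            (1 - p a ^ 2)⁻¹ * ((s (a+1) - p a * s a) * (1 - p a * 1)) :=
      OU1D.QF_closed β n s hβ hs (by omega) (fun i => s i) (fun _ => 1)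
        (fun i => s i) (fun _ => 1) (fun _ => rfl) (fun _ => rfl)
    rw [base]
    have hterm : ∀ a ∈ Finset.range (n-1),
        (1 - p a ^ 2)⁻¹ * ((s (a+1) - p a * s a) * (1 - p a * 1))
          = (s (a+1) - s a * p a) / (1 + p a) := by
      intro a ha
      obtain ⟨h1, h2⟩ := hpfacts a ha
      have e1 : 1 + p a ≠ 0 := ne_of_gt (by linarith)
      have e3 : 1 - p a ^ 2 ≠ 0 := ne_of_gt (by nlinarith)
      field_simp
      ring
    rw [Finset.sum_congr rfl hterm, mul_one]
  have S3 : (∑ i : Fin n, ∑ k : Fin n, s i.1 * (OU1D.Pm β n s)⁻¹ i k * s k.1) = l3 := by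
    have base : (∑ i : Fin n, ∑ k : Fin n, s i.1 * (OU1D.Pm β n s)⁻¹ i k * s k.1)
        = s 0 * s 0 + ∑ a ∈ Finset.range (n-1),
            (1 - p a ^ 2)⁻¹ * ((s (a+1) - p a * s a) * (s (a+1) - p a * s a)) :=
      OU1D.QF_closed β n s hβ hs (by omega) (fun i => s i) (fun i => s i)
        (fun i => s i) (fun i => s i) (fun _ => rfl) (fun _ => rfl)
    rw [base]
    have hterm : ∀ a ∈ Finset.range (n-1),
        (1 - p a ^ 2)⁻¹ * ((s (a+1) - p a * s a) * (s (a+1) - p a * s a))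
          = (s (a+1) - s a * p a) ^ 2 / (1 - p a ^ 2) := by
      intro a ha
      obtain ⟨h1, h2⟩ := hpfacts a ha
      have e3 : 1 - p a ^ 2 ≠ 0 := ne_of_gt (by nlinarith)
      field_simp
    rw [Finset.sum_congr rfl hterm, show s 0 * s 0 = s 0 ^ 2 by ring]
  -- 1-D quadratic forms for Q
  have T1 : (∑ j : Fin m, ∑ l : Fin m, (1:ℝ) * (OU1D.Pm γ m t)⁻¹ j l * 1) = m1 := by
    have base : (∑ j : Fin m, ∑ l : Fin m, (1:ℝ) * (OU1D.Pm γ m t)⁻¹ j l * 1)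
        = 1 * 1 + ∑ a ∈ Finset.range (m-1),
            (1 - q a ^ 2)⁻¹ * ((1 - q a * 1) * (1 - q a * 1)) :=
      OU1D.QF_closed γ m t hγ ht (by omega) (fun _ => 1) (fun _ => 1)
        (fun _ => 1) (fun _ => 1) (fun _ => rfl) (fun _ => rfl)
    rw [base]
    have hterm : ∀ a ∈ Finset.range (m-1),
        (1 - q a ^ 2)⁻¹ * ((1 - q a * 1) * (1 - q a * 1)) = (1 - q a) / (1 + q a) := by
      intro a ha
      obtain ⟨h1, h2⟩ := hqfacts a ha
      have e1 : 1 + q a ≠ 0 := ne_of_gt (by linarith)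
      have e3 : 1 - q a ^ 2 ≠ 0 := ne_of_gt (by nlinarith)
      field_simp
      ring
    rw [Finset.sum_congr rfl hterm, one_mul]
  have T2 : (∑ j : Fin m, ∑ l : Fin m, (1:ℝ) * (OU1D.Pm γ m t)⁻¹ j l * t l.1) = m2 := by
    have base : (∑ j : Fin m, ∑ l : Fin m, (1:ℝ) * (OU1D.Pm γ m t)⁻¹ j l * t l.1)
        = 1 * t 0 + ∑ a ∈ Finset.range (m-1),
            (1 - q a ^ 2)⁻¹ * ((1 - q a * 1) * (t (a+1) - q a * t a)) :=
      OU1D.QF_closed γ m t hγ ht (by omega) (fun _ => 1) (fun j => t j)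
        (fun _ => 1) (fun j => t j) (fun _ => rfl) (fun _ => rfl)
    rw [base]
    have hterm : ∀ a ∈ Finset.range (m-1),
        (1 - q a ^ 2)⁻¹ * ((1 - q a * 1) * (t (a+1) - q a * t a))
          = (t (a+1) - t a * q a) / (1 + q a) := by
      intro a ha
      obtain ⟨h1, h2⟩ := hqfacts a ha
      have e1 : 1 + q a ≠ 0 := ne_of_gt (by linarith)
      have e3 : 1 - q a ^ 2 ≠ 0 := ne_of_gt (by nlinarith)
      field_simp
      ring
    rw [Finset.sum_congr rfl hterm, one_mul]
  have T2' : (∑ j : Fin m, ∑ l : Fin m, t j.1 * (OU1D.Pm γ m t)⁻¹ j l * 1) = m2 := by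
    have base : (∑ j : Fin m, ∑ l : Fin m, t j.1 * (OU1D.Pm γ m t)⁻¹ j l * 1)
        = t 0 * 1 + ∑ a ∈ Finset.range (m-1),
            (1 - q a ^ 2)⁻¹ * ((t (a+1) - q a * t a) * (1 - q a * 1)) :=
      OU1D.QF_closed γ m t hγ ht (by omega) (fun j => t j) (fun _ => 1)
        (fun j => t j) (fun _ => 1) (fun _ => rfl) (fun _ => rfl)
    rw [base]
    have hterm : ∀ a ∈ Finset.range (m-1),
        (1 - q a ^ 2)⁻¹ * ((t (a+1) - q a * t a) * (1 - q a * 1))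
          = (t (a+1) - t a * q a) / (1 + q a) := by
      intro a ha
      obtain ⟨h1, h2⟩ := hqfacts a ha
      have e1 : 1 + q a ≠ 0 := ne_of_gt (by linarith)
      have e3 : 1 - q a ^ 2 ≠ 0 := ne_of_gt (by nlinarith)
      field_simp
      ring
    rw [Finset.sum_congr rfl hterm, mul_one]
  have T3 : (∑ j : Fin m, ∑ l : Fin m, t j.1 * (OU1D.Pm γ m t)⁻¹ j l * t l.1) = m3 := by
    have base : (∑ j : Fin m, ∑ l : Fin m, t j.1 * (OU1D.Pm γ m t)⁻¹ j l * t l.1)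
        = t 0 * t 0 + ∑ a ∈ Finset.range (m-1),
            (1 - q a ^ 2)⁻¹ * ((t (a+1) - q a * t a) * (t (a+1) - q a * t a)) :=
      OU1D.QF_closed γ m t hγ ht (by omega) (fun j => t j) (fun j => t j)
        (fun j => t j) (fun j => t j) (fun _ => rfl) (fun _ => rfl)
    rw [base]
    have hterm : ∀ a ∈ Finset.range (m-1),
        (1 - q a ^ 2)⁻¹ * ((t (a+1) - q a * t a) * (t (a+1) - q a * t a))
          = (t (a+1) - t a * q a) ^ 2 / (1 - q a ^ 2) := by
      intro a ha
      obtain ⟨h1, h2⟩ := hqfacts a ha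
      have e3 : 1 - q a ^ 2 ≠ 0 := ne_of_gt (by nlinarith)
      field_simp
    rw [Finset.sum_congr rfl hterm, show t 0 * t 0 = t 0 ^ 2 by ring]
  -- G row decompositions
  have hG0 : ∀ x : Fin n × Fin m, G 0 x = (fun _ : ℕ => (1:ℝ)) x.1.1 * (fun _ : ℕ => (1:ℝ)) x.2.1 := by
    intro x; simp [G]
  have hG1 : ∀ x : Fin n × Fin m, G 1 x = (fun k : ℕ => s k) x.1.1 * (fun _ : ℕ => (1:ℝ)) x.2.1 := by
    intro x; simp [G]
  have hG2 : ∀ x : Fin n × Fin m, G 2 x = (fun _ : ℕ => (1:ℝ)) x.1.1 * (fun k : ℕ => t k) x.2.1 := by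
    intro x; simp [G]
  ext a b
  fin_cases a <;> fin_cases b
  · refine (OU1D.entry_val _ _ G 0 0 (fun _ : ℕ => (1:ℝ)) (fun _ : ℕ => (1:ℝ)) (fun _ : ℕ => (1:ℝ)) (fun _ : ℕ => (1:ℝ)) hG0 hG0).trans ?_
    show (∑ i : Fin n, ∑ k : Fin n, (1:ℝ) * (OU1D.Pm β n s)⁻¹ i k * 1) *
        (∑ j : Fin m, ∑ l : Fin m, (1:ℝ) * (OU1D.Pm γ m t)⁻¹ j l * 1) = _
    rw [S1, T1]; rfl
  · refine (OU1D.entry_val _ _ G 0 1 (fun _ : ℕ => (1:ℝ)) (fun k : ℕ => s k) (fun _ : ℕ => (1:ℝ)) (fun _ : ℕ => (1:ℝ)) hG0 hG1).trans ?_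
    show (∑ i : Fin n, ∑ k : Fin n, (1:ℝ) * (OU1D.Pm β n s)⁻¹ i k * s k.1) *
        (∑ j : Fin m, ∑ l : Fin m, (1:ℝ) * (OU1D.Pm γ m t)⁻¹ j l * 1) = _
    rw [S2, T1]; rfl
  · refine (OU1D.entry_val _ _ G 0 2 (fun _ : ℕ => (1:ℝ)) (fun _ : ℕ => (1:ℝ)) (fun _ : ℕ => (1:ℝ)) (fun k : ℕ => t k) hG0 hG2).trans ?_
    show (∑ i : Fin n, ∑ k : Fin n, (1:ℝ) * (OU1D.Pm β n s)⁻¹ i k * 1) *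
        (∑ j : Fin m, ∑ l : Fin m, (1:ℝ) * (OU1D.Pm γ m t)⁻¹ j l * t l.1) = _
    rw [S1, T2]; rfl
  · refine (OU1D.entry_val _ _ G 1 0 (fun k : ℕ => s k) (fun _ : ℕ => (1:ℝ)) (fun _ : ℕ => (1:ℝ)) (fun _ : ℕ => (1:ℝ)) hG1 hG0).trans ?_
    show (∑ i : Fin n, ∑ k : Fin n, s i.1 * (OU1D.Pm β n s)⁻¹ i k * 1) *
        (∑ j : Fin m, ∑ l : Fin m, (1:ℝ) * (OU1D.Pm γ m t)⁻¹ j l * 1) = _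
    rw [S2', T1]; rfl
  · refine (OU1D.entry_val _ _ G 1 1 (fun k : ℕ => s k) (fun k : ℕ => s k) (fun _ : ℕ => (1:ℝ)) (fun _ : ℕ => (1:ℝ)) hG1 hG1).trans ?_
    show (∑ i : Fin n, ∑ k : Fin n, s i.1 * (OU1D.Pm β n s)⁻¹ i k * s k.1) *
        (∑ j : Fin m, ∑ l : Fin m, (1:ℝ) * (OU1D.Pm γ m t)⁻¹ j l * 1) = _
    rw [S3, T1]; rfl
  · refine (OU1D.entry_val _ _ G 1 2 (fun k : ℕ => s k) (fun _ : ℕ => (1:ℝ)) (fun _ : ℕ => (1:ℝ)) (fun k : ℕ => t k) hG1 hG2).trans ?_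
    show (∑ i : Fin n, ∑ k : Fin n, s i.1 * (OU1D.Pm β n s)⁻¹ i k * 1) *
        (∑ j : Fin m, ∑ l : Fin m, (1:ℝ) * (OU1D.Pm γ m t)⁻¹ j l * t l.1) = _
    rw [S2', T2]; rfl
  · refine (OU1D.entry_val _ _ G 2 0 (fun _ : ℕ => (1:ℝ)) (fun _ : ℕ => (1:ℝ)) (fun k : ℕ => t k) (fun _ : ℕ => (1:ℝ)) hG2 hG0).trans ?_
    show (∑ i : Fin n, ∑ k : Fin n, (1:ℝ) * (OU1D.Pm β n s)⁻¹ i k * 1) *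
        (∑ j : Fin m, ∑ l : Fin m, t j.1 * (OU1D.Pm γ m t)⁻¹ j l * 1) = _
    rw [S1, T2']; rfl
  · refine (OU1D.entry_val _ _ G 2 1 (fun _ : ℕ => (1:ℝ)) (fun k : ℕ => s k) (fun k : ℕ => t k) (fun _ : ℕ => (1:ℝ)) hG2 hG1).trans ?_
    show (∑ i : Fin n, ∑ k : Fin n, (1:ℝ) * (OU1D.Pm β n s)⁻¹ i k * s k.1) *
        (∑ j : Fin m, ∑ l : Fin m, t j.1 * (OU1D.Pm γ m t)⁻¹ j l * 1) = _
    rw [S2, T2']; rfl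
  · refine (OU1D.entry_val _ _ G 2 2 (fun _ : ℕ => (1:ℝ)) (fun _ : ℕ => (1:ℝ)) (fun k : ℕ => t k) (fun k : ℕ => t k) hG2 hG2).trans ?_
    show (∑ i : Fin n, ∑ k : Fin n, (1:ℝ) * (OU1D.Pm β n s)⁻¹ i k * 1) *
        (∑ j : Fin m, ∑ l : Fin m, t j.1 * (OU1D.Pm γ m t)⁻¹ j l * t l.1) = _
    rw [S1, T3]; rfl
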